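/- Let R be a Hermitian quartic form on C^2 with the symmetry R(X,Ȳ,Z,W̄) = conj(R(Y,X̄,W,Z̄)), Ric its first Ricci contraction, α,β ∈ ℝ with β ≠ 0, c ∈ ℝ, and suppose α·Ric(Z,Z̄) + β·R(Z,Z̄,Z,Z̄) = c for all unit Z ∈ C². Then R(e₁,ē₂,e₂,ē₂) + R(e₂,ē₂,e₁,ē₂) − R(e₁,ē₂,e₁,ē₁) − R(e₁,ē₁,e₁,ē₂) = 0. -/
import Mathlib


open BigOperators Finset

noncomputable section

namespace Stmt2

/-- Evaluation of a quartic form on `ℂ^n` given by its components: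
complex-linear in slots 1,3, conjugate-linear in slots 2,4. -/
def eval {n : ℕ} (R : Fin n → Fin n → Fin n → Fin n → ℂ) (X Y Z W : Fin n → ℂ) : ℂ :=
  ∑ i, ∑ j, ∑ k, ∑ l,
    X i * (starRingEnd ℂ) (Y j) * Z k * (starRingEnd ℂ) (W l) * R i j k l

/-- First Ricci contraction: `Ric(X, Ȳ) = ∑ᵢ R(eᵢ, ēᵢ, X, Ȳ)`. -/
def ric {n : ℕ} (R : Fin n → Fin n → Fin n → Fin n → ℂ) (X Y : Fin n → ℂ) : ℂ :=
  ∑ i, ∑ k, ∑ l, X k * (starRingEnd ℂ) (Y l) * R i i k l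

/-- If a Hermitian quartic form on `ℂ²` has constant mixed curvature
`α·Ric(Z,Z̄) + β·R(Z,Z̄,Z,Z̄) = c` on unit vectors (with `β ≠ 0`),
then `R(e₁,ē₂,e₂,ē₂) + R(e₂,ē₂,e₁,ē₂) − R(e₁,ē₂,e₁,ē₁) − R(e₁,ē₁,e₁,ē₂) = 0`
(vanishing of `W⁻₂`). -/
theorem constant_mixed_curvature_W2_vanishes
    (R : Fin 2 → Fin 2 → Fin 2 → Fin 2 → ℂ)
    (hherm : ∀ i j k l, R i j k l = (starRingEnd ℂ) (R j i l k))
    (α β c : ℝ) (hβ : β ≠ 0)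
    (hconst : ∀ Z : Fin 2 → ℂ, (∑ i, Complex.normSq (Z i)) = 1 →
      (α : ℂ) * ric R Z Z + (β : ℂ) * eval R Z Z Z Z = (c : ℂ)) :
    R 0 1 1 1 + R 1 1 0 1 - R 0 1 0 0 - R 0 0 0 1 = 0 := by
  have h1 := hconst ![(3/5 : ℂ), (4/5:ℂ)] (by simp [Fin.sum_univ_two, Complex.normSq_apply]; norm_num)
  have h2 := hconst ![(3/5 : ℂ), -(4/5:ℂ)] (by simp [Fin.sum_univ_two, Complex.normSq_apply]; norm_num)
  have h3 := hconst ![(4/5 : ℂ), (3/5:ℂ)] (by simp [Fin.sum_univ_two, Complex.normSq_apply]; norm_num)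
  have h4 := hconst ![(4/5 : ℂ), -(3/5:ℂ)] (by simp [Fin.sum_univ_two, Complex.normSq_apply]; norm_num)
  have h5 := hconst ![(3/5 : ℂ), (4/5:ℂ)*Complex.I] (by simp [Fin.sum_univ_two, Complex.normSq_apply]; norm_num)
  have h6 := hconst ![(3/5 : ℂ), -((4/5:ℂ)*Complex.I)] (by simp [Fin.sum_univ_two, Complex.normSq_apply]; norm_num)
  have h7 := hconst ![(4/5 : ℂ), (3/5:ℂ)*Complex.I] (by simp [Fin.sum_univ_two, Complex.normSq_apply]; norm_num)
  have h8 := hconst ![(4/5 : ℂ), -((3/5:ℂ)*Complex.I)] (by simp [Fin.sum_univ_two, Complex.normSq_apply]; norm_num)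
  simp only [eval, ric, Fin.sum_univ_two, Matrix.cons_val_zero, Matrix.cons_val_one,
    Matrix.head_cons, map_mul, map_neg, map_div₀, map_ofNat, Complex.conj_I] at h1 h2 h3 h4 h5 h6 h7 h8
  have hβ' : (β : ℂ) ≠ 0 := by exact_mod_cast hβ
  have key : (β:ℂ) * (R 0 1 1 1 + R 1 1 0 1 - R 0 1 0 0 - R 0 0 0 1) = 0 := by
    linear_combination (625/336 : ℂ) * (h1 - h2 - h3 + h4)
      + (625/336 : ℂ) * Complex.I * (h5 - h6 - h7 + h8)
      + ((β:ℂ)/2 * ((Complex.I^2 - 1) * (- R 0 1 1 1 - R 1 1 0 1 + R 1 1 1 0 + R 1 0 1 1)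
          + (- R 0 1 0 0 - R 0 0 0 1 + R 0 0 1 0 + R 1 0 0 0))) * Complex.I_sq
  rcases mul_eq_zero.mp key with h | h
  · exact absurd h hβ'
  · exact h


end Stmt2
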